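/- arXiv:2310.08542 — 3 statements merged into one kernel-verified Lean document; each statement's English description precedes it below -/
import Mathlib

section
/- The number of cyclically reduced words of length n in a free group of rank r ≥ 2 (with respect to a fixed basis) equals (2r-1)^n + r + (-1)^n (r-1). -/
/-- A letter in the alphabet of a free group of rank `r`: a basis element together
with a sign (`true` = positive, `false` = inverse). The alphabet has `2r` letters. -/
abbrev Letter (r : ℕ) := Fin r × Bool

/-- The formal inverse of a letter. -/
def Letter.inv {r : ℕ} (x : Letter r) : Letter r := (x.1, !x.2)

/-- A word is reduced if no letter is immediately followed by its inverse. -/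
def Reduced {r : ℕ} (w : List (Letter r)) : Prop :=
  List.Chain' (fun a b => b ≠ Letter.inv a) w

/-- A word is cyclically reduced if it is reduced and its first letter is not
the inverse of its last letter. -/
def CyclicallyReduced {r : ℕ} (w : List (Letter r)) : Prop :=
  Reduced w ∧ ∀ a b, w.head? = some a → w.getLast? = some b → a ≠ Letter.inv b

namespace CRAux

@[simp] lemma inv_inv {r : ℕ} (x : Letter r) : x.inv.inv = x := by
  simp [Letter.inv]

lemma ne_inv_self {r : ℕ} (x : Letter r) : x ≠ Letter.inv x := by
  simp [Letter.inv, Prod.ext_iff]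

/-- count of reduced words of length n satisfying extra predicate Q -/
noncomputable def cnt (r n : ℕ) (Q : List (Letter r) → Prop) : ℕ :=
  Nat.card {w : List (Letter r) // (Reduced w ∧ Q w) ∧ w.length = n}

instance fin1 (r n : ℕ) (Q : List (Letter r) → Prop) :
    Finite {w : List (Letter r) // (Reduced w ∧ Q w) ∧ w.length = n} := by
  have h : {w : List (Letter r) | w.length = n}.Finite := List.finite_length_eq (Letter r) n
  have : Finite {w : List (Letter r) // w.length = n} := h
  exact Finite.of_injective (β := {w : List (Letter r) // w.length = n})
    (fun w => ⟨w.1, w.2.2⟩) (fun a b hab => Subtype.ext (congrArg Subtype.val hab :))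

lemma cnt_congr {r n : ℕ} {Q Q' : List (Letter r) → Prop}
    (h : ∀ w : List (Letter r), Reduced w → w.length = n → (Q w ↔ Q' w)) :
    cnt r n Q = cnt r n Q' := by
  apply Nat.card_congr
  exact Equiv.subtypeEquiv (Equiv.refl _) (fun w => by
    constructor
    · rintro ⟨⟨h1, h2⟩, h3⟩; exact ⟨⟨h1, (h w h1 h3).1 h2⟩, h3⟩
    · rintro ⟨⟨h1, h2⟩, h3⟩; exact ⟨⟨h1, (h w h1 h3).2 h2⟩, h3⟩)

lemma split (r n : ℕ) (Q : List (Letter r) → Prop) :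
    cnt r n Q + cnt r n (fun w => ¬ Q w) = cnt r n (fun _ => True) := by
  classical
  unfold cnt
  rw [← Nat.card_sum]
  apply Nat.card_congr
  refine Equiv.trans ?_ (Equiv.sumCompl (p := fun w : {w : List (Letter r) //
    (Reduced w ∧ True) ∧ w.length = n} => Q w.1))
  refine Equiv.sumCongr ?_ ?_
  · exact ⟨fun w => ⟨⟨w.1, ⟨⟨w.2.1.1, trivial⟩, w.2.2⟩⟩, w.2.1.2⟩,
      fun w => ⟨w.1.1, ⟨⟨w.1.2.1.1, w.2⟩, w.1.2.2⟩⟩,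
      fun w => rfl, fun w => rfl⟩
  · exact ⟨fun w => ⟨⟨w.1, ⟨⟨w.2.1.1, trivial⟩, w.2.2⟩⟩, w.2.1.2⟩,
      fun w => ⟨w.1.1, ⟨⟨w.1.2.1.1, w.2⟩, w.1.2.2⟩⟩,
      fun w => rfl, fun w => rfl⟩

lemma reduced_concat_iff {r : ℕ} {u : List (Letter r)} {x : Letter r} :
    Reduced (u ++ [x]) ↔ Reduced u ∧ ∀ a ∈ u.getLast?, x ≠ Letter.inv a := by
  simp [Reduced, List.Chain', List.isChain_append]

/-- the key equivalence: reduced words of length n+1 whose last letter is g of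
the first letter correspond to reduced words of length n with a head/last condition. -/
lemma inv_ne_iff {r : ℕ} {a b : Letter r} : Letter.inv a ≠ b ↔ a ≠ Letter.inv b := by
  constructor
  · rintro h rfl; exact h (inv_inv b)
  · rintro h rfl; exact h (inv_inv a).symm

lemma main_iff {r : ℕ} (g : Letter r → Letter r) {u : List (Letter r)} {x : Letter r}
    (hu : u ≠ []) :
    (Reduced (u ++ [x]) ∧ (u ++ [x]).getLast? = ((u ++ [x]).head?).map g) ↔
    ((Reduced u ∧ ∀ a ∈ u.head?, ∀ b ∈ u.getLast?, Letter.inv (g a) ≠ b)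
      ∧ x = g (u.head hu)) := by
  rw [List.getLast?_concat, reduced_concat_iff, List.head?_append,
    List.head?_eq_head hu]
  have hor : ∀ (a : Letter r) (o : Option (Letter r)), (some a).or o = some a := fun _ _ => rfl
  simp only [hor, Option.map_some, Option.some.injEq,
    List.head?_eq_head hu, Option.mem_def, forall_eq']
  constructor
  · rintro ⟨⟨h1, h2⟩, h3⟩
    refine ⟨⟨h1, fun b hb => ?_⟩, h3⟩
    rw [inv_ne_iff, ← h3]
    exact fun hc => h2 b hb (by rw [hc])
  · rintro ⟨⟨h1, h2⟩, h3⟩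
    refine ⟨⟨h1, fun a ha => ?_⟩, h3⟩
    rw [h3]
    intro hc
    exact h2 a ha (by rw [hc, inv_inv])

lemma key (r : ℕ) (g : Letter r → Letter r) (n : ℕ) (hn : 1 ≤ n) :
    cnt r (n+1) (fun w => w.getLast? = w.head?.map g)
      = cnt r n (fun w => ∀ a ∈ w.head?, ∀ b ∈ w.getLast?, Letter.inv (g a) ≠ b) := by
  apply Nat.card_congr
  have hne : ∀ (w : List (Letter r)), w.length = n → w ≠ [] := by
    rintro w hw rfl; simp at hw; omega
  have hne' : ∀ (w : List (Letter r)), w.length = n + 1 → w.dropLast ≠ [] := by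
    intro w hw
    have : w.dropLast.length = n := by rw [List.length_dropLast, hw]; omega
    exact hne _ this
  refine ⟨fun w => ⟨w.1.dropLast, ?_⟩,
    fun u => ⟨u.1 ++ [g (u.1.head (hne _ u.2.2))], ?_⟩, ?_, ?_⟩
  · obtain ⟨⟨h1, h2⟩, h3⟩ := w.2
    have hd := hne' _ h3
    have hw : w.1.dropLast ++ [w.1.getLast (List.ne_nil_of_length_pos (by omega))] = w.1 :=
      List.dropLast_append_getLast _
    have := (main_iff g hd).mp (by rw [hw]; exact ⟨h1, h2⟩)
    refine ⟨this.1, by rw [List.length_dropLast, h3]; omega⟩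
  · obtain ⟨⟨h1, h2⟩, h3⟩ := u.2
    have := (main_iff g (hne _ h3)).mpr ⟨⟨h1, h2⟩, rfl⟩
    exact ⟨this, by simp [h3]⟩
  · rintro ⟨w, ⟨h1, h2⟩, h3⟩
    apply Subtype.ext
    simp only
    have hd := hne' _ h3
    have hwne : w ≠ [] := List.ne_nil_of_length_pos (by omega)
    have hw : w.dropLast ++ [w.getLast hwne] = w := List.dropLast_append_getLast _
    have := ((main_iff g hd).mp (by rw [hw]; exact ⟨h1, h2⟩)).2
    conv_rhs => rw [← hw]
    rw [← this]
  · rintro ⟨u, ⟨h1, h2⟩, h3⟩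
    apply Subtype.ext
    simp only
    exact List.dropLast_concat


lemma reduced_singleton {r : ℕ} (x : Letter r) : Reduced [x] := by
  simp [Reduced, List.Chain', List.isChain_singleton]

lemma cnt_one_true (r : ℕ) : cnt r 1 (fun _ => True) = 2 * r := by
  have : Nat.card (Letter r) = 2 * r := by
    simp [Nat.card_eq_fintype_card, mul_comm]
  rw [← this]
  apply Nat.card_congr
  refine ⟨fun w => w.1.head (by rintro h; have := w.2.2; simp [h] at this),
    fun x => ⟨[x], ⟨⟨reduced_singleton x, trivial⟩, rfl⟩⟩, ?_, fun x => rfl⟩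
  rintro ⟨w, ⟨h1, -⟩, h2⟩
  apply Subtype.ext
  obtain ⟨a, rfl⟩ := List.length_eq_one_iff.mp h2
  rfl

lemma cnt_one_A (r : ℕ) : cnt r 1 (fun w => w.getLast? = w.head?) = 2 * r := by
  rw [← cnt_one_true r]
  apply cnt_congr
  intro w _ hw
  obtain ⟨a, rfl⟩ := List.length_eq_one_iff.mp hw
  simp

lemma cnt_one_B (r : ℕ) : cnt r 1 (fun w => w.getLast? = w.head?.map Letter.inv) = 0 := by
  rw [cnt]
  rw [Nat.card_eq_zero]
  left
  constructor
  rintro ⟨w, ⟨-, h2⟩, h3⟩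
  obtain ⟨a, rfl⟩ := List.length_eq_one_iff.mp h3
  simp at h2
  exact ne_inv_self a h2

lemma card_ne (r : ℕ) (hr : 1 ≤ r) (c : Letter r) :
    Nat.card {x : Letter r // x ≠ c} = 2 * r - 1 := by
  rw [Nat.card_eq_fintype_card]
  classical
  have : Fintype.card {x : Letter r // ¬ x = c} = Fintype.card (Letter r) - Fintype.card {x : Letter r // x = c} := Fintype.card_subtype_compl _
  simp only [this, Fintype.card_subtype_eq]
  simp [mul_comm]

lemma cnt_true_succ (r n : ℕ) (hr : 1 ≤ r) (hn : 1 ≤ n) :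
    cnt r (n+1) (fun _ => True) = cnt r n (fun _ => True) * (2 * r - 1) := by
  classical
  set c₀ : Letter r := (⟨0, hr⟩, true) with hc₀
  have hne : ∀ (w : List (Letter r)), w.length = n → w ≠ [] := by
    rintro w hw rfl; simp at hw; omega
  have e1 : {w : List (Letter r) // (Reduced w ∧ True) ∧ w.length = n + 1} ≃
      Σ u : {u : List (Letter r) // (Reduced u ∧ True) ∧ u.length = n},
        {x : Letter r // ∀ a ∈ u.1.getLast?, x ≠ Letter.inv a} := by
    refine ⟨fun w => ⟨⟨w.1.dropLast, ?_⟩, ⟨w.1.getLast (by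
        rintro h; have := w.2.2; simp [h] at this), ?_⟩⟩,
      fun p => ⟨p.1.1 ++ [p.2.1], ?_⟩, ?_, ?_⟩
    · obtain ⟨⟨h1, -⟩, h3⟩ := w.2
      have hwne : w.1 ≠ [] := List.ne_nil_of_length_pos (by omega)
      have hw : w.1.dropLast ++ [w.1.getLast hwne] = w.1 := List.dropLast_append_getLast _
      have := reduced_concat_iff.mp (by rw [hw]; exact h1)
      exact ⟨⟨this.1, trivial⟩, by rw [List.length_dropLast, h3]; omega⟩
    · obtain ⟨⟨h1, -⟩, h3⟩ := w.2
      have hwne : w.1 ≠ [] := List.ne_nil_of_length_pos (by omega)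
      have hw : w.1.dropLast ++ [w.1.getLast hwne] = w.1 := List.dropLast_append_getLast _
      exact (reduced_concat_iff.mp (by rw [hw]; exact h1)).2
    · obtain ⟨⟨h1, -⟩, h3⟩ := p.1.2
      refine ⟨⟨reduced_concat_iff.mpr ⟨h1, p.2.2⟩, trivial⟩, by simp [h3]⟩
    · rintro ⟨w, ⟨h1, -⟩, h3⟩
      apply Subtype.ext
      exact List.dropLast_append_getLast _
    · rintro ⟨⟨u, hu⟩, ⟨x, hx⟩⟩
      have h1 : (u ++ [x]).dropLast = u := List.dropLast_concat
      have h2 : (u ++ [x]).getLast (by simp) = x := List.getLast_concat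
      refine Sigma.ext (Subtype.ext h1) ?_
      rw [Subtype.heq_iff_coe_eq]
      · exact h2
      · intro y
        constructor
        · intro hy a ha
          exact hy a (by simpa [List.dropLast_concat] using ha)
        · intro hy a ha
          exact hy a (by simpa [List.dropLast_concat] using ha)
  have e2 : ∀ u : {u : List (Letter r) // (Reduced u ∧ True) ∧ u.length = n},
      {x : Letter r // ∀ a ∈ u.1.getLast?, x ≠ Letter.inv a} ≃ {x : Letter r // x ≠ c₀} := by
    intro u
    have hune : u.1 ≠ [] := hne _ u.2.2
    have hl : u.1.getLast? = some (u.1.getLast hune) := List.getLast?_eq_getLast _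
    set c : Letter r := Letter.inv (u.1.getLast hune) with hc
    refine Equiv.trans (Equiv.subtypeEquivRight (q := fun x => x ≠ c) ?_) ?_
    · intro x
      simp [hl, hc]
    · refine Equiv.subtypeEquiv (Equiv.swap c c₀) (fun x => ?_)
      exact ((Equiv.swap c c₀).injective.ne_iff' (Equiv.swap_apply_left c c₀)).symm
  have e3 := (e1.trans (Equiv.sigmaCongrRight e2)).trans
    (Equiv.sigmaEquivProd _ _)
  rw [cnt, cnt, Nat.card_congr e3, Nat.card_prod, card_ne r hr]

lemma cnt_CR (r n : ℕ) (hn : 1 ≤ n) :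
    Nat.card {w : List (Letter r) // CyclicallyReduced w ∧ w.length = n}
      = cnt r n (fun w => ¬ (w.getLast? = w.head?.map Letter.inv)) := by
  rw [cnt]
  apply Nat.card_congr
  apply Equiv.subtypeEquiv (Equiv.refl _)
  intro w
  simp only [Equiv.refl_apply, and_congr_left_iff]
  intro hlen
  have hwne : w ≠ [] := by rintro rfl; simp at hlen; omega
  have hh : w.head? = some (w.head hwne) := List.head?_eq_head hwne
  have hl : w.getLast? = some (w.getLast hwne) := List.getLast?_eq_getLast _
  constructor
  · rintro ⟨h1, h2⟩
    refine ⟨h1, ?_⟩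
    rw [hh, hl]
    simp only [Option.map_some, Option.some.injEq]
    exact fun hc => h2 _ _ hh hl (by rw [hc, inv_inv])
  · rintro ⟨h1, h2⟩
    refine ⟨h1, fun a b ha hb hc => ?_⟩
    rw [hh] at ha
    rw [hl] at hb
    apply h2
    rw [hh, hl]
    simp only [Option.map_some, Option.some.injEq]
    rw [Option.some_inj.mp hb, Option.some_inj.mp ha, hc, inv_inv]

lemma nonempty_of_len {r n : ℕ} (hn : 1 ≤ n) {w : List (Letter r)} (hw : w.length = n) :
    w ≠ [] := by rintro rfl; simp at hw; omega

/-- B(n+1) = R(n) - A(n) in ℤ -/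
lemma recB (r n : ℕ) (hn : 1 ≤ n) :
    (cnt r (n+1) (fun w => w.getLast? = w.head?.map Letter.inv) : ℤ)
      = cnt r n (fun _ => True) - cnt r n (fun w => w.getLast? = w.head?) := by
  have h1 := key r Letter.inv n hn
  have h2 : cnt r n (fun w => ∀ a ∈ w.head?, ∀ b ∈ w.getLast?, Letter.inv (Letter.inv a) ≠ b)
      = cnt r n (fun w => ¬ (w.getLast? = w.head?)) := by
    apply cnt_congr
    intro w _ hw
    have hwne := nonempty_of_len hn hw
    rw [List.head?_eq_head hwne, List.getLast?_eq_getLast hwne]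
    simp only [Option.mem_def, Option.some.injEq, forall_eq', inv_inv]
    exact ne_comm
  have h3 := split r n (fun w => w.getLast? = w.head?)
  rw [h1, h2]
  omega

/-- A(n+1) = R(n) - B(n) in ℤ -/
lemma recA (r n : ℕ) (hn : 1 ≤ n) :
    (cnt r (n+1) (fun w => w.getLast? = w.head?) : ℤ)
      = cnt r n (fun _ => True) - cnt r n (fun w => w.getLast? = w.head?.map Letter.inv) := by
  have h0 : cnt r (n+1) (fun w => w.getLast? = w.head?)
      = cnt r (n+1) (fun w => w.getLast? = w.head?.map id) := by
    apply cnt_congr; intro w _ _; simp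
  have h1 := key r id n hn
  have h2 : cnt r n (fun w => ∀ a ∈ w.head?, ∀ b ∈ w.getLast?, Letter.inv (id a) ≠ b)
      = cnt r n (fun w => ¬ (w.getLast? = w.head?.map Letter.inv)) := by
    apply cnt_congr
    intro w _ hw
    have hwne := nonempty_of_len hn hw
    rw [List.head?_eq_head hwne, List.getLast?_eq_getLast hwne]
    simp only [Option.mem_def, Option.some.injEq, forall_eq', id_eq, Option.map_some]
    exact ne_comm
  have h3 := split r n (fun w => w.getLast? = w.head?.map Letter.inv)
  rw [h0, h1, h2]
  omega

/-- R(k+1) = 2r (2r-1)^k -/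
lemma formR (r : ℕ) (hr : 1 ≤ r) : ∀ k : ℕ,
    (cnt r (k+1) (fun _ => True) : ℤ) = 2 * r * (2 * r - 1) ^ k := by
  intro k
  induction k with
  | zero => simp [cnt_one_true]
  | succ k ih =>
    rw [cnt_true_succ r (k+1) hr (by omega), pow_succ]
    push_cast [ih]
    have : ((2 * r - 1 : ℕ) : ℤ) = 2 * (r : ℤ) - 1 := by
      push_cast [Nat.cast_sub (by omega : 1 ≤ 2 * r)]; ring
    rw [this]
    ring

/-- B(k+1) = (2r-1)^k - r - (-1)^(k+1) (r-1) -/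
lemma formB (r : ℕ) (hr : 1 ≤ r) : ∀ k : ℕ,
    (cnt r (k+1) (fun w => w.getLast? = w.head?.map Letter.inv) : ℤ)
      = (2 * r - 1) ^ k - r - (-1) ^ (k+1) * ((r : ℤ) - 1) := by
  have key2 : ∀ k : ℕ,
      (cnt r (k+3) (fun w => w.getLast? = w.head?.map Letter.inv) : ℤ)
        = cnt r (k+2) (fun _ => True) - cnt r (k+1) (fun _ => True)
          + cnt r (k+1) (fun w => w.getLast? = w.head?.map Letter.inv) := by
    intro k
    rw [recB r (k+2) (by omega), recA r (k+1) (by omega)]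
    ring
  have base1 : (cnt r 1 (fun w => w.getLast? = w.head?.map Letter.inv) : ℤ) = 0 := by
    rw [cnt_one_B]; simp
  have base2 : (cnt r 2 (fun w => w.getLast? = w.head?.map Letter.inv) : ℤ) = 0 := by
    rw [recB r 1 le_rfl, cnt_one_true, cnt_one_A]; ring
  intro k
  induction k using Nat.strong_induction_on with
  | _ k ih =>
    match k with
    | 0 => rw [base1]; ring
    | 1 => rw [base2]; ring
    | (m+2) =>
      rw [key2 m, formR r hr (m+1), formR r hr m, ih m (by omega)]
      ring

end CRAux

/-- The number of cyclically reduced words of length `n ≥ 1` in a free group of rank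
`r ≥ 2` equals `(2r-1)^n + r + (-1)^n (r-1)`. -/
theorem stmt0 (r n : ℕ) (hr : 2 ≤ r) (hn : 1 ≤ n) :
    (Nat.card {w : List (Letter r) // CyclicallyReduced w ∧ w.length = n} : ℤ)
      = (2 * (r : ℤ) - 1) ^ n + (r : ℤ) + (-1) ^ n * ((r : ℤ) - 1) := by
  obtain ⟨k, rfl⟩ : ∃ k, n = k + 1 := ⟨n - 1, by omega⟩
  rw [CRAux.cnt_CR r (k+1) (by omega)]
  have hsplit := CRAux.split r (k+1) (fun w => w.getLast? = w.head?.map Letter.inv)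
  have h1 := CRAux.formR r (by omega) k
  have h2 := CRAux.formB r (by omega) k
  have : (CRAux.cnt r (k+1) (fun w => ¬ (w.getLast? = w.head?.map Letter.inv)) : ℤ)
      = CRAux.cnt r (k+1) (fun _ => True)
        - CRAux.cnt r (k+1) (fun w => w.getLast? = w.head?.map Letter.inv) := by omega
  rw [this, h1, h2, pow_succ]
  ring
end

section
/- For a cyclically reduced word w of length k in a free group of rank r ≥ 2, the number of reduced words of length n whose cyclic reduction is w equals (2r-2)(2r-1)^{(n-k)/2 - 1} if n > k and n - k is even, equals 1 if n = k, and equals 0 if n - k is odd or n < k. -/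
/-- `CyclicReductionOf w u` holds if `u` is a reduced word whose cyclic reduction is the
cyclically reduced word `w`, i.e. `u = a⁻¹ w a` as a reduced product for some word `a`. -/
def CyclicReductionOf {r : ℕ} (w u : List (Letter r)) : Prop :=
  CyclicallyReduced w ∧ Reduced u ∧
    ∃ a : List (Letter r), u = (a.map Letter.inv).reverse ++ w ++ a

section Helpers
variable {r : ℕ}

@[simp] lemma Letter.inv_inv (x : Letter r) : x.inv.inv = x := by
  simp [Letter.inv]

instance finite_aux (P : List (Letter r) → Prop) (m : ℕ) :
    Finite {a : List (Letter r) // a.length = m ∧ P a} := by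
  have h : {a : List (Letter r) | a.length = m ∧ P a}.Finite :=
    (List.finite_length_eq _ m).subset (fun a ha => ha.1)
  exact h.to_subtype

lemma card_ext (m : ℕ) (x : Letter r) :
    Nat.card {a : List (Letter r) // a.length = m ∧ Reduced (x :: a)}
      = (2 * r - 1) ^ m := by
  induction m generalizing x with
  | zero =>
    have : Unique {a : List (Letter r) // a.length = 0 ∧ Reduced (x :: a)} := by
      refine ⟨⟨⟨[], rfl, by simp [Reduced, List.Chain']⟩⟩, ?_⟩
      rintro ⟨a, ha, h⟩
      ext1
      simpa using List.length_eq_zero_iff.mp ha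
    haveI := this
    rw [pow_zero]
    exact Nat.card_unique
  | succ m ih =>
    have key : Function.Bijective
        (fun p : (Σ _b : {b : Letter r // b ≠ x.inv},
              {t : List (Letter r) // t.length = m ∧ Reduced (_b.1 :: t)}) =>
          (⟨p.1.1 :: p.2.1, by simp [p.2.2.1],
              List.isChain_cons_cons.mpr ⟨p.1.2, p.2.2.2⟩⟩ :
            {a : List (Letter r) // a.length = m + 1 ∧ Reduced (x :: a)})) := by
      constructor
      · rintro ⟨⟨b, hb⟩, ⟨t, ht, hc⟩⟩ ⟨⟨b', hb'⟩, ⟨t', ht', hc'⟩⟩ h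
        simp only [Subtype.mk.injEq, List.cons.injEq] at h
        obtain ⟨rfl, rfl⟩ := h
        rfl
      · rintro ⟨a, ha, hc⟩
        match a, ha with
        | b :: t, ha =>
          exact ⟨⟨⟨b, (List.isChain_cons_cons.mp hc).1⟩,
            ⟨t, by simpa using ha, (List.isChain_cons_cons.mp hc).2⟩⟩, rfl⟩
    rw [← Nat.card_eq_of_bijective _ key]
    have hfin : ∀ b : {b : Letter r // b ≠ x.inv},
        Finite {t : List (Letter r) // t.length = m ∧ Reduced (b.1 :: t)} :=
      fun b => finite_aux _ m
    have e : (Σ _b : {b : Letter r // b ≠ x.inv},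
          {t : List (Letter r) // t.length = m ∧ Reduced (_b.1 :: t)})
        ≃ {b : Letter r // b ≠ x.inv} × Fin ((2 * r - 1) ^ m) :=
      (Equiv.sigmaCongrRight fun (b : {b : Letter r // b ≠ x.inv}) =>
        (Finite.equivFinOfCardEq (ih b.1))).trans (Equiv.sigmaEquivProd _ _)
    rw [Nat.card_congr e, Nat.card_prod, Nat.card_eq_fintype_card,
      Nat.card_eq_fintype_card, Fintype.card_fin]
    have : Fintype.card {b : Letter r // b ≠ x.inv} = 2 * r - 1 := by
      have h1 : Fintype.card {b : Letter r // ¬ (b = x.inv)}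
          = Fintype.card (Letter r) - Fintype.card {b : Letter r // b = x.inv} :=
        Fintype.card_subtype_compl _
      rw [Fintype.card_subtype_eq] at h1
      simp only [Fintype.card_prod, Fintype.card_fin, Fintype.card_bool] at h1
      show Fintype.card {b : Letter r // ¬ (b = x.inv)} = 2 * r - 1
      omega
    rw [this, pow_succ]
    ring

lemma card_head (c₁ c₂ : Letter r) (hne : c₁ ≠ c₂) (m : ℕ) :
    Nat.card {a : List (Letter r) // a.length = m + 1 ∧ Reduced a ∧
        ∀ b, a.head? = some b → b ≠ c₁ ∧ b ≠ c₂}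
      = (2 * r - 2) * (2 * r - 1) ^ m := by
  have key : Function.Bijective
      (fun p : (Σ _b : {b : Letter r // b ≠ c₁ ∧ b ≠ c₂},
            {t : List (Letter r) // t.length = m ∧ Reduced (_b.1 :: t)}) =>
        (⟨p.1.1 :: p.2.1, by simp [p.2.2.1],
            p.2.2.2, by rintro b hb; rw [List.head?_cons, Option.some.injEq] at hb
                        exact hb ▸ p.1.2⟩ :
          {a : List (Letter r) // a.length = m + 1 ∧ Reduced a ∧
            ∀ b, a.head? = some b → b ≠ c₁ ∧ b ≠ c₂})) := by
    constructor
    · rintro ⟨⟨b, hb⟩, ⟨t, ht, hc⟩⟩ ⟨⟨b', hb'⟩, ⟨t', ht', hc'⟩⟩ h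
      simp only [Subtype.mk.injEq, List.cons.injEq] at h
      obtain ⟨rfl, rfl⟩ := h
      rfl
    · rintro ⟨a, ha, hc, hh⟩
      match a, ha with
      | b :: t, ha =>
        exact ⟨⟨⟨b, hh b rfl⟩, ⟨t, by simpa using ha, hc⟩⟩, rfl⟩
  rw [← Nat.card_eq_of_bijective _ key]
  have e : (Σ _b : {b : Letter r // b ≠ c₁ ∧ b ≠ c₂},
        {t : List (Letter r) // t.length = m ∧ Reduced (_b.1 :: t)})
      ≃ {b : Letter r // b ≠ c₁ ∧ b ≠ c₂} × Fin ((2 * r - 1) ^ m) :=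
    (Equiv.sigmaCongrRight fun (b : {b : Letter r // b ≠ c₁ ∧ b ≠ c₂}) =>
      (Finite.equivFinOfCardEq (card_ext m b.1))).trans (Equiv.sigmaEquivProd _ _)
  rw [Nat.card_congr e, Nat.card_prod, Nat.card_eq_fintype_card,
    Nat.card_eq_fintype_card, Fintype.card_fin]
  congr 1
  have h2 : Fintype.card {b : Letter r // b ≠ c₁ ∧ b ≠ c₂}
      = (({c₁, c₂}ᶜ : Finset (Letter r))).card := by
    rw [Fintype.card_subtype]
    congr 1
    ext b
    simp [not_or]
  rw [h2, Finset.card_compl,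
    Finset.card_insert_of_notMem (by simpa using hne), Finset.card_singleton]
  simp only [Fintype.card_prod, Fintype.card_fin, Fintype.card_bool]
  omega

lemma reduced_conj (w : List (Letter r)) (hw : CyclicallyReduced w) (hne : w ≠ [])
    (a : List (Letter r)) :
    Reduced ((a.map Letter.inv).reverse ++ w ++ a) ↔
      Reduced a ∧ ∀ b, a.head? = some b →
        b ≠ w.head hne ∧ b ≠ Letter.inv (w.getLast hne) := by
  have hred : Reduced ((a.map Letter.inv).reverse) ↔ Reduced a := by
    unfold Reduced List.Chain'
    rw [List.isChain_reverse, List.isChain_map]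
    constructor
    · exact fun h => h.imp fun x y hxy h' => hxy (by rw [h', Letter.inv_inv])
    · refine fun h => h.imp fun x y hxy h' => hxy ?_
      rw [Letter.inv_inv] at h'
      exact h'.symm
  unfold Reduced List.Chain'
  rw [List.isChain_append, List.isChain_append]
  rw [List.getLast?_append, List.getLast?_reverse, List.getLast?_eq_getLast hne,
    List.head?_eq_head hne]
  constructor
  · rintro ⟨⟨hL, hw', hj1⟩, ha, hj2⟩
    refine ⟨hred.mp hL, fun b hb => ?_⟩
    have h1 := hj1 (Letter.inv b) (by simp [List.head?_map, hb]) (w.head hne) rfl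
    have h2 := hj2 (w.getLast hne) rfl b hb
    refine ⟨fun h => h1 (h ▸ (Letter.inv_inv b).symm), h2⟩
  · rintro ⟨ha, hcond⟩
    refine ⟨⟨hred.mpr ha, hw.1, ?_⟩, ha, ?_⟩
    · rintro x hx y hy
      rw [List.head?_map] at hx
      match hb : a.head? with
      | none => rw [hb] at hx; simp at hx
      | some b =>
        rw [hb] at hx
        simp only [Option.map_some, Option.mem_def, Option.some.injEq] at hx
        simp only [Option.mem_def, Option.some.injEq] at hy
        subst hx; subst hy
        intro h
        exact (hcond b hb).1 (by rw [h, Letter.inv_inv])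
    · rintro x hx y hy
      have hx' : w.getLast hne = x :=
        Option.some.inj (hx : (some (w.getLast hne)) = some x)
      subst hx'
      exact (hcond y hy).2


lemma card_conj (w : List (Letter r)) (hw : CyclicallyReduced w) (hne : w ≠ []) (m : ℕ) :
    Nat.card {u : List (Letter r) // u.length = w.length + 2 * m ∧ CyclicReductionOf w u}
      = Nat.card {a : List (Letter r) // a.length = m ∧ Reduced a ∧
          ∀ b, a.head? = some b → b ≠ w.head hne ∧ b ≠ Letter.inv (w.getLast hne)} := by
  symm
  refine Nat.card_eq_of_bijective
    (fun p => ⟨(p.1.map Letter.inv).reverse ++ w ++ p.1,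
      by simp only [List.length_append, List.length_reverse, List.length_map, p.2.1]; omega,
      hw, (reduced_conj w hw hne p.1).mpr ⟨p.2.2.1, p.2.2.2⟩, ⟨p.1, rfl⟩⟩) ⟨?_, ?_⟩
  · rintro ⟨a, ha, hra, hca⟩ ⟨a', ha', hra', hca'⟩ h
    simp only [Subtype.mk.injEq] at h
    exact Subtype.ext (List.append_inj h (by simp [ha, ha'])).2
  · rintro ⟨u, hlen, hwc, hred, a, rfl⟩
    have ham : a.length = m := by
      simp only [List.length_append, List.length_reverse, List.length_map] at hlen
      omega
    obtain ⟨hra, hc⟩ := (reduced_conj w hw hne a).mp hred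
    exact ⟨⟨a, ham, hra, hc⟩, rfl⟩

end Helpers

/-- For a cyclically reduced word `w` of length `k ≥ 1` in a free group of rank `r ≥ 2`,
the number of reduced words of length `n` whose cyclic reduction is `w` equals
`(2r-2)(2r-1)^{(n-k)/2 - 1}` if `n > k` and `n - k` is even, `1` if `n = k`, and `0`
otherwise (i.e. if `n < k` or `n - k` is odd). -/
theorem stmt1 (r k n : ℕ) (hr : 2 ≤ r) (hk : 1 ≤ k)
    (w : List (Letter r)) (hw : CyclicallyReduced w) (hwk : w.length = k) :
    Nat.card {u : List (Letter r) // u.length = n ∧ CyclicReductionOf w u}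
      = if n = k then 1
        else if k < n ∧ (n - k) % 2 = 0 then (2 * r - 2) * (2 * r - 1) ^ ((n - k) / 2 - 1)
        else 0 := by
  have hne : w ≠ [] := by
    intro h
    rw [h] at hwk
    simp at hwk
    omega
  by_cases h1 : n = k
  · subst h1
    rw [if_pos rfl, show n = w.length + 2 * 0 from by omega, card_conj w hw hne 0]
    have : Unique {a : List (Letter r) // a.length = 0 ∧ Reduced a ∧
        ∀ b, a.head? = some b → b ≠ w.head hne ∧ b ≠ Letter.inv (w.getLast hne)} := by
      refine ⟨⟨⟨[], rfl, by simp [Reduced, List.Chain'], by simp⟩⟩, ?_⟩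
      rintro ⟨a, ha, h⟩
      ext1
      simpa using List.length_eq_zero_iff.mp ha
    exact Nat.card_unique
  · rw [if_neg h1]
    by_cases h2 : k < n ∧ (n - k) % 2 = 0
    · rw [if_pos h2]
      obtain ⟨hlt, hmod⟩ := h2
      set m := (n - k) / 2 with hm
      have hm1 : 1 ≤ m := by omega
      have hcc : w.head hne ≠ Letter.inv (w.getLast hne) :=
        hw.2 _ _ (List.head?_eq_head hne) (List.getLast?_eq_getLast hne)
      rw [show n = w.length + 2 * (m - 1 + 1) from by omega,
        card_conj w hw hne (m - 1 + 1), card_head _ _ hcc (m - 1)]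
    · rw [if_neg h2]
      haveI : IsEmpty {u : List (Letter r) // u.length = n ∧ CyclicReductionOf w u} := by
        refine ⟨?_⟩
        rintro ⟨u, hlen, hwc, hred, a, rfl⟩
        simp only [List.length_append, List.length_reverse, List.length_map] at hlen
        omega
      exact Nat.card_of_isEmpty
end

section
/- Let B be a subset of cyclically reduced words that is exponentially generic in the set C of cyclically reduced words of a free group of rank r ≥ 2. Let A be the set of all reduced words w ∈ F whose cyclic reduction lies in B. Then A is exponentially generic in F. -/
/-- The number of words in `A` of length exactly `n` (shell count). -/
noncomputable def shellCount (r : ℕ) (A : Set (List (Letter r))) (n : ℕ) : ℕ :=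
  Nat.card {w : List (Letter r) // w ∈ A ∧ w.length = n}

/-- The number of words in `A` of length at most `n` (ball count). -/
noncomputable def ballCount (r : ℕ) (A : Set (List (Letter r))) (n : ℕ) : ℕ :=
  Nat.card {w : List (Letter r) // w ∈ A ∧ w.length ≤ n}

/-- The set of cyclically reduced words. -/
def CRset (r : ℕ) : Set (List (Letter r)) := {w | CyclicallyReduced w}

/-- `A` is exponentially generic in `B` if the proportion of the ball of radius `n` of `B`
missed by `A` is at most `e^{b - cn}` for all sufficiently large `n`, for some `c > 0`. -/
def ExpGeneric (r : ℕ) (A B : Set (List (Letter r))) : Prop :=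
  ∃ c > (0 : ℝ), ∃ b : ℝ, ∃ N : ℕ, ∀ n : ℕ, N ≤ n →
    1 - (ballCount r A n : ℝ) / (ballCount r B n : ℝ) ≤ Real.exp (b - c * n)

namespace FGAux
variable {r : ℕ}

abbrev Rel (r : ℕ) : Letter r → Letter r → Prop := fun a b => b ≠ Letter.inv a

@[simp] lemma inv_inv (x : Letter r) : Letter.inv (Letter.inv x) = x := by
  simp [Letter.inv]

lemma inv_ne (x : Letter r) : Letter.inv x ≠ x := by
  simp [Letter.inv, Prod.ext_iff]

lemma finite_ball (P : List (Letter r) → Prop) (n : ℕ) :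
    Finite {w : List (Letter r) // P w ∧ w.length ≤ n} :=
  (List.finite_length_le (Letter r) n |>.subset (fun w hw => hw.2)).to_subtype

lemma finite_shell (P : List (Letter r) → Prop) (n : ℕ) :
    Finite {w : List (Letter r) // P w ∧ w.length = n} :=
  (List.finite_length_le (Letter r) n |>.subset (fun w hw => hw.2.le)).to_subtype

lemma finite_chain (x : Letter r) (n : ℕ) :
    Finite {w : List (Letter r) // List.Chain (Rel r) x w ∧ w.length = n} :=
  finite_shell _ n

lemma nat_card_sigma {ι : Type*} [Fintype ι] (F : ι → Type*) [∀ i, Finite (F i)] :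
    Nat.card (Σ i, F i) = ∑ i, Nat.card (F i) := by
  classical
  haveI : ∀ i, Fintype (F i) := fun i => Fintype.ofFinite _
  rw [Nat.card_eq_fintype_card]
  rw [Fintype.card_sigma]
  exact Finset.sum_congr rfl fun i _ => (Nat.card_eq_fintype_card).symm

lemma card_letter : Fintype.card (Letter r) = 2 * r := by
  simp [mul_comm]

lemma card_ne_letter (hr : 1 ≤ r) (z : Letter r) :
    Fintype.card {y : Letter r // y ≠ z} = 2 * r - 1 := by
  classical
  rw [Fintype.card_subtype_compl, Fintype.card_subtype_eq, card_letter]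

end FGAux
namespace FGAux
variable {r : ℕ}

/-- decomposition map for chain-counting -/
def chainDec (x : Letter r) (j : ℕ) :
    {w : List (Letter r) // List.Chain (Rel r) x w ∧ w.length = j + 1} →
    Σ y : {y : Letter r // y ≠ Letter.inv x},
      {t : List (Letter r) // List.Chain (Rel r) y.1 t ∧ t.length = j} :=
  fun p => match p with
  | ⟨[], h⟩ => absurd h.2 (by simp)
  | ⟨y :: t, h⟩ =>
      ⟨⟨y, (List.chain_cons.mp h.1).1⟩,
       ⟨t, (List.chain_cons.mp h.1).2, by simpa using h.2⟩⟩

lemma chainDec_inj (x : Letter r) (j : ℕ) : Function.Injective (chainDec x j) := by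
  rintro ⟨w₁, h₁⟩ ⟨w₂, h₂⟩ heq
  match w₁, h₁, w₂, h₂ with
  | [], h₁, _, _ => exact absurd h₁.2 (by simp)
  | _ :: _, _, [], h₂ => exact absurd h₂.2 (by simp)
  | y₁ :: t₁, h₁, y₂ :: t₂, h₂ =>
      simp only [chainDec, Sigma.mk.inj_iff, Subtype.mk.injEq] at heq
      obtain ⟨hy, ht⟩ := heq
      subst hy
      have : t₁ = t₂ := congrArg Subtype.val (eq_of_heq ht)
      simp [this]

lemma chain_card (hr : 1 ≤ r) (x : Letter r) (j : ℕ) :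
    Nat.card {w : List (Letter r) // List.Chain (Rel r) x w ∧ w.length = j} ≤ (2 * r - 1) ^ j := by
  induction j generalizing x with
  | zero =>
      have : Subsingleton {w : List (Letter r) // List.Chain (Rel r) x w ∧ w.length = 0} := by
        constructor; rintro ⟨w, -, hw⟩ ⟨w', -, hw'⟩
        simp [List.length_eq_zero_iff.mp hw, List.length_eq_zero_iff.mp hw']
      have h1 : Nat.card {w : List (Letter r) // List.Chain (Rel r) x w ∧ w.length = 0}
          ≤ Nat.card Unit :=
        Nat.card_le_card_of_injective (fun _ => ()) (fun a b _ => this.allEq a b)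
      simpa using h1
  | succ j ih =>
      haveI := fun (y : {y : Letter r // y ≠ Letter.inv x}) => finite_chain (r := r) y.1 j
      have hle := Nat.card_le_card_of_injective _ (chainDec_inj x j)
      rw [nat_card_sigma] at hle
      refine hle.trans ?_
      calc ∑ y : {y : Letter r // y ≠ Letter.inv x},
            Nat.card {t : List (Letter r) // List.Chain (Rel r) y.1 t ∧ t.length = j}
          ≤ ∑ _y : {y : Letter r // y ≠ Letter.inv x}, (2 * r - 1) ^ j :=
            Finset.sum_le_sum fun y _ => ih y.1
        _ = (2 * r - 1) ^ (j + 1) := by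
            rw [Finset.sum_const, Finset.card_univ, card_ne_letter hr, smul_eq_mul, pow_succ]
            ring

end FGAux
namespace FGAux
variable {r : ℕ}

lemma reduced_cons {y : Letter r} {t : List (Letter r)} :
    Reduced (y :: t) ↔ List.Chain (Rel r) y t := Iff.rfl

/-- decomposition of a nonempty reduced word -/
def redDec (j : ℕ) :
    {w : List (Letter r) // Reduced w ∧ w.length = j + 1} →
    Σ _y : Letter r, {t : List (Letter r) // List.Chain (Rel r) _y t ∧ t.length = j} :=
  fun p => match p with
  | ⟨[], h⟩ => absurd h.2 (by simp)
  | ⟨y :: t, h⟩ => ⟨y, ⟨t, reduced_cons.mp h.1, by simpa using h.2⟩⟩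

lemma redDec_inj (j : ℕ) : Function.Injective (redDec (r := r) j) := by
  rintro ⟨w₁, h₁⟩ ⟨w₂, h₂⟩ heq
  match w₁, h₁, w₂, h₂ with
  | [], h₁, _, _ => exact absurd h₁.2 (by simp)
  | _ :: _, _, [], h₂ => exact absurd h₂.2 (by simp)
  | y₁ :: t₁, h₁, y₂ :: t₂, h₂ =>
      simp only [redDec, Sigma.mk.inj_iff, Subtype.mk.injEq] at heq
      obtain ⟨hy, ht⟩ := heq
      subst hy
      have : t₁ = t₂ := congrArg Subtype.val (eq_of_heq ht)
      simp [this]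

lemma reduced_shell_le (hr : 1 ≤ r) (j : ℕ) :
    Nat.card {w : List (Letter r) // Reduced w ∧ w.length = j} ≤ 2 * r * (2 * r - 1) ^ j := by
  cases j with
  | zero =>
      have hs : Subsingleton {w : List (Letter r) // Reduced w ∧ w.length = 0} := by
        constructor; rintro ⟨w, -, hw⟩ ⟨w', -, hw'⟩
        simp [List.length_eq_zero_iff.mp hw, List.length_eq_zero_iff.mp hw']
      have h1 : Nat.card {w : List (Letter r) // Reduced w ∧ w.length = 0} ≤ Nat.card Unit :=
        Nat.card_le_card_of_injective (fun _ => ()) (fun a b _ => hs.allEq a b)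
      simp only [Nat.card_unique] at h1
      calc Nat.card {w : List (Letter r) // Reduced w ∧ w.length = 0} ≤ 1 := h1
        _ ≤ 2 * r * (2 * r - 1) ^ 0 := by simp; omega
  | succ j =>
      haveI := fun (y : Letter r) => finite_chain (r := r) y j
      have hle := Nat.card_le_card_of_injective _ (redDec_inj (r := r) j)
      rw [nat_card_sigma] at hle
      refine hle.trans ?_
      calc ∑ y : Letter r, Nat.card {t : List (Letter r) // List.Chain (Rel r) y t ∧ t.length = j}
          ≤ ∑ _y : Letter r, (2 * r - 1) ^ j := Finset.sum_le_sum fun y _ => chain_card hr y j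
        _ = 2 * r * (2 * r - 1) ^ j := by
            rw [Finset.sum_const, Finset.card_univ, card_letter, smul_eq_mul]
        _ ≤ 2 * r * (2 * r - 1) ^ (j + 1) :=
            Nat.mul_le_mul_left _ (Nat.pow_le_pow_right (by omega) (Nat.le_succ j))

lemma ball_le_sum_shell (P : List (Letter r) → Prop) (n : ℕ) :
    Nat.card {w : List (Letter r) // P w ∧ w.length ≤ n} ≤
      ∑ j ∈ Finset.range (n + 1), Nat.card {w : List (Letter r) // P w ∧ w.length = j} := by
  haveI := fun (j : Fin (n + 1)) => finite_shell (r := r) P j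
  let f : {w : List (Letter r) // P w ∧ w.length ≤ n} →
      Σ j : Fin (n + 1), {w : List (Letter r) // P w ∧ w.length = (j : ℕ)} :=
    fun w => ⟨⟨w.1.length, Nat.lt_succ_of_le w.2.2⟩, ⟨w.1, w.2.1, rfl⟩⟩
  have hf : Function.Injective f := by
    intro a b h
    have h2 : (f a).2.1 = (f b).2.1 := by rw [h]
    exact Subtype.ext h2
  have := Nat.card_le_card_of_injective f hf
  rwa [nat_card_sigma, Fin.sum_univ_eq_sum_range
    (fun j => Nat.card {w : List (Letter r) // P w ∧ w.length = j}) (n + 1)] at this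

end FGAux
namespace FGAux
variable {r : ℕ}

/-- equivalence between `Fin (2r-1)` and letters distinct from a given one -/
noncomputable def eLet (hr : 1 ≤ r) (z : Letter r) : Fin (2 * r - 1) ≃ {y : Letter r // y ≠ z} :=
  (Fintype.equivFinOfCardEq (card_ne_letter hr z)).symm

/-- build a reduced word from a sequence of digits -/
noncomputable def gWord (hr : 1 ≤ r) : Letter r → List (Fin (2 * r - 1)) → List (Letter r)
  | _, [] => []
  | p, i :: t => (eLet hr (Letter.inv p) i).1 :: gWord hr (eLet hr (Letter.inv p) i).1 t

lemma gWord_length (hr : 1 ≤ r) (p : Letter r) (l : List (Fin (2 * r - 1))) :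
    (gWord hr p l).length = l.length := by
  induction l generalizing p with
  | nil => simp [gWord]
  | cons i t ih => simp [gWord, ih]

lemma gWord_chain (hr : 1 ≤ r) (p : Letter r) (l : List (Fin (2 * r - 1))) :
    List.Chain (Rel r) p (gWord hr p l) := by
  induction l generalizing p with
  | nil => simp [gWord, List.Chain.nil]
  | cons i t ih =>
      rw [gWord]
      exact List.chain_cons.mpr ⟨(eLet hr (Letter.inv p) i).2, ih _⟩

lemma gWord_reduced (hr : 1 ≤ r) (p : Letter r) (l : List (Fin (2 * r - 1))) :
    Reduced (gWord hr p l) := by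
  have h := gWord_chain hr p l
  have : List.Chain' (Rel r) (p :: gWord hr p l) := h
  exact this.tail

lemma gWord_inj (hr : 1 ≤ r) (p : Letter r) : Function.Injective (gWord hr p) := by
  intro l₁ l₂ h
  induction l₁ generalizing p l₂ with
  | nil =>
      cases l₂ with
      | nil => rfl
      | cons i t => simp [gWord] at h
  | cons i t ih =>
      cases l₂ with
      | nil => simp [gWord] at h
      | cons i' t' =>
          rw [gWord, gWord, List.cons_eq_cons] at h
          obtain ⟨h1, h2⟩ := h
          have hi : i = i' := (eLet hr (Letter.inv p)).injective (Subtype.ext h1)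
          subst hi
          rw [ih _ h2]

lemma reduced_ball_lower (hr : 1 ≤ r) (n : ℕ) :
    (2 * r - 1) ^ n ≤ ballCount r {u | Reduced u} n := by
  haveI : Finite {w : List (Letter r) // w ∈ {u | Reduced u} ∧ w.length ≤ n} :=
    finite_ball _ n
  have p0 : Letter r := (⟨0, hr⟩, true)
  let f : (Fin n → Fin (2 * r - 1)) →
      {w : List (Letter r) // w ∈ {u | Reduced u} ∧ w.length ≤ n} :=
    fun v => ⟨gWord hr p0 (List.ofFn v), gWord_reduced hr p0 _,
      by rw [gWord_length]; simp⟩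
  have hf : Function.Injective f := by
    intro a b h
    have := congrArg Subtype.val h
    exact List.ofFn_injective (gWord_inj hr p0 this)
  have := Nat.card_le_card_of_injective f hf
  calc (2 * r - 1) ^ n = Nat.card (Fin n → Fin (2 * r - 1)) := by
        classical
        rw [Nat.card_eq_fintype_card, Fintype.card_fun]
        simp
    _ ≤ _ := this

end FGAux
namespace FGAux
variable {r : ℕ}

lemma exists_cyclicReduction (u : List (Letter r)) (hu : Reduced u) :
    ∃ w a : List (Letter r), CyclicallyReduced w ∧
      u = (a.map Letter.inv).reverse ++ w ++ a := by
  suffices H : ∀ (n : ℕ) (u : List (Letter r)), Reduced u → u.length = n →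
      ∃ w a : List (Letter r), CyclicallyReduced w ∧
        u = (a.map Letter.inv).reverse ++ w ++ a from H u.length u hu rfl
  clear hu u
  intro n
  induction n using Nat.strong_induction_on with
  | _ n ih =>
  intro u hu hn
  by_cases hc : CyclicallyReduced u
  · exact ⟨u, [], hc, by simp⟩
  · -- u is not cyclically reduced: head is inverse of last
    have hne : u ≠ [] := by
      rintro rfl
      exact hc ⟨hu, by simp⟩
    obtain ⟨x, t, rfl⟩ := List.exists_cons_of_ne_nil hne
    rcases List.eq_nil_or_concat t with rfl | ⟨s, y, rfl⟩
    · -- u = [x], which is cyclically reduced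
      refine absurd ?_ hc
      refine ⟨hu, ?_⟩
      rintro a b ha hb
      simp at ha hb
      subst ha; subst hb
      exact fun h => inv_ne _ h.symm
    · -- u = x :: s ++ [y]
      rw [List.concat_eq_append] at *
      have hx : x = Letter.inv y := by
        by_contra hxy
        refine hc ⟨hu, ?_⟩
        rintro a b ha hb
        simp at ha
        subst ha
        rw [show x :: (s ++ [y]) = (x :: s) ++ [y] by simp, List.getLast?_concat] at hb
        simp at hb
        subst hb
        exact hxy
      have hs : Reduced s := by
        have : s <:+: x :: (s ++ [y]) := ⟨[x], [y], by simp⟩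
        exact List.IsChain.infix hu this
      have hlt : s.length < n := by
        subst hn; simp
      obtain ⟨w, a, hw, hdec⟩ := ih s.length hlt s hs rfl
      refine ⟨w, a ++ [y], hw, ?_⟩
      rw [List.map_append, List.reverse_append]
      simp [hdec, hx]
  done

end FGAux
namespace FGAux
variable {r : ℕ}

lemma ball_eq_ncard (A : Set (List (Letter r))) (n : ℕ) :
    ballCount r A n = (A ∩ {l | l.length ≤ n}).ncard := rfl

lemma ball_mono_set {A A' : Set (List (Letter r))} (h : A ⊆ A') (n : ℕ) :
    ballCount r A n ≤ ballCount r A' n := by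
  haveI : Finite {w : List (Letter r) // w ∈ A' ∧ w.length ≤ n} := finite_ball _ n
  exact Nat.card_le_card_of_injective
    (fun w => ⟨w.1, h w.2.1, w.2.2⟩)
    (fun a b hab => Subtype.ext (congrArg Subtype.val hab : _))

lemma ball_mono_n (A : Set (List (Letter r))) {n m : ℕ} (h : n ≤ m) :
    ballCount r A n ≤ ballCount r A m := by
  haveI : Finite {w : List (Letter r) // w ∈ A ∧ w.length ≤ m} := finite_ball _ m
  exact Nat.card_le_card_of_injective
    (fun w => ⟨w.1, w.2.1, w.2.2.trans h⟩)
    (fun a b hab => Subtype.ext (congrArg Subtype.val hab : _))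

lemma ball_partition {A S : Set (List (Letter r))} (hAS : A ⊆ S) (n : ℕ) :
    ballCount r S n = ballCount r A n + ballCount r (S \ A) n := by
  rw [ball_eq_ncard, ball_eq_ncard, ball_eq_ncard]
  have hU : S ∩ {l | l.length ≤ n} =
      (A ∩ {l | l.length ≤ n}) ∪ ((S \ A) ∩ {l | l.length ≤ n}) := by
    rw [← Set.union_inter_distrib_right, Set.union_diff_cancel hAS]
  rw [hU]
  refine Set.ncard_union_eq ?_ ?_ ?_
  · exact (Set.disjoint_sdiff_right).mono (Set.inter_subset_left) (Set.inter_subset_left)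
  · exact (List.finite_length_le (Letter r) n).subset (fun w hw => hw.2)
  · exact (List.finite_length_le (Letter r) n).subset (fun w hw => hw.2)

lemma crset_nonempty_ball (n : ℕ) : 1 ≤ ballCount r (CRset r) n := by
  haveI : Finite {w : List (Letter r) // w ∈ CRset r ∧ w.length ≤ n} := finite_ball _ n
  have hmem : ([] : List (Letter r)) ∈ CRset r := by
    refine ⟨List.isChain_nil, ?_⟩
    intro a b ha
    simp at ha
  have : Nonempty {w : List (Letter r) // w ∈ CRset r ∧ w.length ≤ n} :=
    ⟨⟨[], hmem, by simp⟩⟩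
  exact Nat.one_le_iff_ne_zero.mpr (Nat.card_ne_zero.mpr ⟨this, inferInstance⟩)

lemma card_fixedLength (k : ℕ) :
    Nat.card {l : List (Letter r) // l.length = k} = (2 * r) ^ k := by
  have h : Nat.card (List.Vector (Letter r) k) = (2 * r) ^ k := by
    rw [Nat.card_eq_fintype_card, card_vector, card_letter]
  exact h

lemma finite_fixedLength (k : ℕ) : Finite {l : List (Letter r) // l.length = k} :=
  ((List.finite_length_le (Letter r) k).subset (fun l hl => le_of_eq hl)).to_subtype

end FGAux
namespace FGAux
variable {r : ℕ}

lemma bad_ball_le (B : Set (List (Letter r))) (n : ℕ) :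
    ballCount r ({u | Reduced u} \ {u | ∃ w ∈ B, CyclicReductionOf w u}) n ≤
      ∑ k ∈ Finset.range (n / 2 + 1),
        (2 * r) ^ k * ballCount r (CRset r \ B) (n - 2 * k) := by
  classical
  set A : Set (List (Letter r)) := {u | ∃ w ∈ B, CyclicReductionOf w u} with hA
  set D : Set (List (Letter r)) := CRset r \ B with hD
  haveI : ∀ k : Fin (n / 2 + 1), Finite {l : List (Letter r) // l.length = (k : ℕ)} :=
    fun _ => finite_fixedLength _
  haveI : ∀ k : Fin (n / 2 + 1),
      Finite {w : List (Letter r) // w ∈ D ∧ w.length ≤ n - 2 * (k : ℕ)} :=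
    fun _ => finite_ball _ _
  have key : ∀ u : {u : List (Letter r) // u ∈ ({u | Reduced u} \ A) ∧ u.length ≤ n},
      ∃ w a : List (Letter r), CyclicallyReduced w ∧
        u.1 = (a.map Letter.inv).reverse ++ w ++ a :=
    fun u => exists_cyclicReduction u.1 u.2.1.1
  let W : {u : List (Letter r) // u ∈ ({u | Reduced u} \ A) ∧ u.length ≤ n} →
      List (Letter r) := fun u => (key u).choose
  let Aw : {u : List (Letter r) // u ∈ ({u | Reduced u} \ A) ∧ u.length ≤ n} →
      List (Letter r) := fun u => (key u).choose_spec.choose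
  have spec : ∀ u, CyclicallyReduced (W u) ∧
      u.1 = ((Aw u).map Letter.inv).reverse ++ W u ++ Aw u :=
    fun u => (key u).choose_spec.choose_spec
  have hlen : ∀ u, u.1.length = 2 * (Aw u).length + (W u).length := by
    intro u
    have h := congrArg List.length (spec u).2
    simp [List.length_append] at h
    omega
  have hk : ∀ u, (Aw u).length < n / 2 + 1 := by
    intro u
    have h1 := hlen u
    have h2 := u.2.2
    omega
  let F : {u : List (Letter r) // u ∈ ({u | Reduced u} \ A) ∧ u.length ≤ n} →
      Σ k : Fin (n / 2 + 1),
        ({l : List (Letter r) // l.length = (k : ℕ)} ×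
         {w : List (Letter r) // w ∈ D ∧ w.length ≤ n - 2 * (k : ℕ)}) :=
    fun u => ⟨⟨(Aw u).length, hk u⟩,
      ⟨Aw u, rfl⟩,
      ⟨W u, ⟨(spec u).1, fun hWB => u.2.1.2
          ⟨W u, hWB, (spec u).1, u.2.1.1, Aw u, (spec u).2⟩⟩,
        by have h1 := hlen u; have h2 := u.2.2; simp only [Fin.val_mk]; omega⟩⟩
  have hF : Function.Injective F := by
    intro u₁ u₂ h
    have ha : Aw u₁ = Aw u₂ := congrArg (fun p => p.2.1.1) h
    have hw : W u₁ = W u₂ := congrArg (fun p => p.2.2.1) h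
    apply Subtype.ext
    rw [(spec u₁).2, (spec u₂).2, ha, hw]
  have hcard := Nat.card_le_card_of_injective F hF
  rw [nat_card_sigma] at hcard
  refine le_trans hcard ?_
  rw [← Fin.sum_univ_eq_sum_range
    (fun k => (2 * r) ^ k * ballCount r D (n - 2 * k)) (n / 2 + 1)]
  refine le_of_eq (Finset.sum_congr rfl fun k _ => ?_)
  rw [Nat.card_prod, card_fixedLength]
  rfl

end FGAux
namespace FGAux
variable {r : ℕ}

lemma geom9 (x : ℝ) (hx0 : 0 ≤ x) (hx1 : x ≤ 8 / 9) (M : ℕ) :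
    ∑ k ∈ Finset.range M, x ^ k ≤ 9 := by
  have h1 : ∑ k ∈ Finset.range M, x ^ k ≤ ∑ k ∈ Finset.range M, (8 / 9 : ℝ) ^ k :=
    Finset.sum_le_sum fun k _ => pow_le_pow_left₀ hx0 hx1 k
  have h2 : ∑ k ∈ Finset.range M, (8 / 9 : ℝ) ^ k = ((8 / 9 : ℝ) ^ M - 1) / (8 / 9 - 1) :=
    geom_sum_eq (by norm_num) M
  have h3 : (0 : ℝ) ≤ (8 / 9 : ℝ) ^ M := by positivity
  rw [h2] at h1
  refine h1.trans ?_
  have h4 : (8 / 9 : ℝ) ^ M ≤ 1 := pow_le_one₀ (by norm_num) (by norm_num)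
  rw [div_le_iff_of_neg (by norm_num)]
  linarith

lemma ballC_le_real (hr : 2 ≤ r) (n : ℕ) :
    ((ballCount r (CRset r) n : ℕ) : ℝ) ≤ 3 * r * ((2 * r - 1 : ℕ) : ℝ) ^ n := by
  set Q : ℝ := ((2 * r - 1 : ℕ) : ℝ) with hQdef
  have hQ3 : (3 : ℝ) ≤ Q := by
    rw [hQdef]; exact_mod_cast (by omega : (3 : ℕ) ≤ 2 * r - 1)
  have hQpos : (0 : ℝ) < Q := by linarith
  -- nat-level bound
  have hnat : ballCount r (CRset r) n ≤
      ∑ j ∈ Finset.range (n + 1), 2 * r * (2 * r - 1) ^ j := by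
    have h1 : ballCount r (CRset r) n ≤ ballCount r {u | Reduced u} n :=
      ball_mono_set (fun w hw => hw.1) n
    have h2 : ballCount r {u | Reduced u} n ≤
        ∑ j ∈ Finset.range (n + 1),
          Nat.card {w : List (Letter r) // Reduced w ∧ w.length = j} :=
      ball_le_sum_shell Reduced n
    exact h1.trans (h2.trans (Finset.sum_le_sum fun j _ => reduced_shell_le (by omega) j))
  have hcast : ((ballCount r (CRset r) n : ℕ) : ℝ) ≤
      ∑ j ∈ Finset.range (n + 1), (2 * r : ℝ) * Q ^ j := by
    calc ((ballCount r (CRset r) n : ℕ) : ℝ)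
        ≤ ((∑ j ∈ Finset.range (n + 1), 2 * r * (2 * r - 1) ^ j : ℕ) : ℝ) := by
          exact_mod_cast hnat
      _ = ∑ j ∈ Finset.range (n + 1), (2 * r : ℝ) * Q ^ j := by
          rw [Nat.cast_sum]
          exact Finset.sum_congr rfl fun j _ => by push_cast [hQdef]; ring
  refine hcast.trans ?_
  rw [← Finset.mul_sum, geom_sum_eq (by linarith : Q ≠ 1)]
  have hQn : (0 : ℝ) < Q ^ n := pow_pos hQpos n
  rw [pow_succ]
  have hmain : (Q ^ n * Q - 1) / (Q - 1) ≤ 3 / 2 * Q ^ n := by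
    rw [div_le_iff₀ (by linarith : (0:ℝ) < Q - 1)]
    nlinarith [hQn, mul_le_mul_of_nonneg_left hQ3 (le_of_lt hQn)]
  have hr0 : (0:ℝ) ≤ 2 * (r:ℝ) := by positivity
  nlinarith [mul_le_mul_of_nonneg_left hmain hr0]

lemma ballRed_ge_real (hr : 2 ≤ r) (n : ℕ) :
    ((2 * r - 1 : ℕ) : ℝ) ^ n ≤ ((ballCount r {u | Reduced u} n : ℕ) : ℝ) := by
  exact_mod_cast reduced_ball_lower (by omega) n

end FGAux

open FGAux

set_option maxHeartbeats 2000000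

/-- If `B` is an exponentially generic subset of the cyclically reduced words `C`, then
the set `A` of all reduced words whose cyclic reduction lies in `B` is exponentially
generic in the set of all reduced words (the free group `F`). -/
theorem stmt6 (r : ℕ) (hr : 2 ≤ r) (B : Set (List (Letter r))) (hB : B ⊆ CRset r)
    (hgen : ExpGeneric r B (CRset r)) :
    ExpGeneric r {u | ∃ w ∈ B, CyclicReductionOf w u} {u | Reduced u} := by
  classical
  obtain ⟨c, hc, b, N, hgenN⟩ := hgen
  set A : Set (List (Letter r)) := {u | ∃ w ∈ B, CyclicReductionOf w u} with hAdef
  set D : Set (List (Letter r)) := CRset r \ B with hDdef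
  have hAsub : A ⊆ {u | Reduced u} := by
    rintro u ⟨w, hw, hcyc⟩
    exact hcyc.2.1
  set Q : ℝ := ((2 * r - 1 : ℕ) : ℝ) with hQdef
  have hQ3 : (3 : ℝ) ≤ Q := by
    rw [hQdef]; exact_mod_cast (by omega : (3 : ℕ) ≤ 2 * r - 1)
  have hQpos : (0 : ℝ) < Q := by linarith
  have h2r : ((2 * r : ℕ) : ℝ) = Q + 1 := by
    rw [hQdef]; push_cast [Nat.cast_sub (by omega : 1 ≤ 2 * r)]; ring
  set K : ℝ := 3 * (r : ℝ) with hKdef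
  have hrpos : (0 : ℝ) < (r : ℝ) := by exact_mod_cast (by omega : 0 < r)
  have hKpos : (0 : ℝ) < K := by rw [hKdef]; linarith
  set c' : ℝ := min c (Real.log 2 / 2) with hc'def
  have hlog2 : 0 < Real.log 2 := Real.log_pos (by norm_num)
  have hc'pos : 0 < c' := lt_min hc (by linarith)
  have hc'c : c' ≤ c := min_le_left _ _
  have hc'log : c' ≤ Real.log 2 / 2 := min_le_right _ _
  have hexp2c' : Real.exp (2 * c') ≤ 2 := by
    calc Real.exp (2 * c') ≤ Real.exp (Real.log 2) := Real.exp_le_exp.mpr (by linarith)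
      _ = 2 := Real.exp_log (by norm_num)
  have hexpc' : Real.exp c' ≤ 3 / 2 := by
    have h1 : Real.exp c' ≤ Real.exp (Real.log 2 / 2) := Real.exp_le_exp.mpr hc'log
    have h2 : Real.exp (Real.log 2 / 2) ^ 2 = 2 := by
      rw [← Real.exp_nat_mul, show ((2 : ℕ) : ℝ) * (Real.log 2 / 2) = Real.log 2 by
        push_cast; ring, Real.exp_log (by norm_num : (0 : ℝ) < 2)]
    nlinarith [Real.exp_pos (Real.log 2 / 2), h1, h2]
  have h23 : (2 / 3 : ℝ) ≤ Real.exp (-c') := by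
    rw [Real.exp_neg]
    have hp := Real.exp_pos c'
    have hinv : (Real.exp c')⁻¹ * Real.exp c' = 1 := inv_mul_cancel₀ (ne_of_gt hp)
    nlinarith [inv_nonneg.mpr hp.le]
  -- bound on the defect ball
  have hDbd : ∀ m : ℕ, ((ballCount r D m : ℕ) : ℝ) ≤
      K * Q ^ m * Real.exp (b - c' * m) + K * Q ^ N := by
    intro m
    have h1 : 0 < ballCount r (CRset r) m := crset_nonempty_ball m
    have hCpos : (0 : ℝ) < (ballCount r (CRset r) m : ℝ) := by exact_mod_cast h1
    have hpart := ball_partition (A := B) (S := CRset r) hB m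
    have hCle : ((ballCount r (CRset r) m : ℕ) : ℝ) ≤ K * Q ^ m := by
      rw [hKdef, hQdef]; exact ballC_le_real hr m
    by_cases hm : N ≤ m
    · have hg := hgenN m hm
      have hD : ((ballCount r D m : ℕ) : ℝ) =
          (ballCount r (CRset r) m : ℝ) - (ballCount r B m : ℝ) := by
        have hc2 := congrArg (Nat.cast : ℕ → ℝ) hpart
        push_cast at hc2
        linarith
      have hfrac : ((ballCount r D m : ℕ) : ℝ) / (ballCount r (CRset r) m : ℝ) ≤
          Real.exp (b - c * m) := by
        rw [hD, sub_div, div_self (ne_of_gt hCpos)]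
        exact hg
      have hDle : ((ballCount r D m : ℕ) : ℝ) ≤
          (ballCount r (CRset r) m : ℝ) * Real.exp (b - c * m) := by
        rw [mul_comm]
        exact (div_le_iff₀ hCpos).mp hfrac
      have hee : Real.exp (b - c * m) ≤ Real.exp (b - c' * m) := by
        apply Real.exp_le_exp.mpr
        have : (0 : ℝ) ≤ (m : ℝ) := Nat.cast_nonneg m
        nlinarith
      have hfin : ((ballCount r D m : ℕ) : ℝ) ≤ K * Q ^ m * Real.exp (b - c' * m) := by
        calc ((ballCount r D m : ℕ) : ℝ)
            ≤ (ballCount r (CRset r) m : ℝ) * Real.exp (b - c * m) := hDle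
          _ ≤ (K * Q ^ m) * Real.exp (b - c' * m) := by
              apply mul_le_mul hCle hee (Real.exp_pos _).le
              positivity
      have : (0 : ℝ) ≤ K * Q ^ N := by positivity
      linarith
    · push_neg at hm
      have hmono : ballCount r D m ≤ ballCount r D N := ball_mono_n D hm.le
      have h2 : ballCount r D N ≤ ballCount r (CRset r) N :=
        ball_mono_set Set.diff_subset N
      have h3 : ((ballCount r (CRset r) N : ℕ) : ℝ) ≤ K * Q ^ N := by
        rw [hKdef, hQdef]; exact ballC_le_real hr N
      have h4 : ((ballCount r D m : ℕ) : ℝ) ≤ K * Q ^ N := by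
        calc ((ballCount r D m : ℕ) : ℝ) ≤ ((ballCount r (CRset r) N : ℕ) : ℝ) := by
              exact_mod_cast hmono.trans h2
          _ ≤ K * Q ^ N := h3
      have : (0 : ℝ) ≤ K * Q ^ m * Real.exp (b - c' * m) := by positivity
      linarith
  -- bound on bad words
  have hbad : ∀ n : ℕ, ((ballCount r ({u | Reduced u} \ A) n : ℕ) : ℝ) ≤
      (9 * K * Real.exp b + 2 * K * Q ^ N) * Q ^ n * Real.exp (-(c' * n)) := by
    intro n
    have h0 := bad_ball_le (r := r) B n
    have hcast0 : ((ballCount r ({u | Reduced u} \ A) n : ℕ) : ℝ) ≤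
        ∑ k ∈ Finset.range (n / 2 + 1),
          ((2 * r : ℕ) : ℝ) ^ k * ((ballCount r D (n - 2 * k) : ℕ) : ℝ) := by
      calc ((ballCount r ({u | Reduced u} \ A) n : ℕ) : ℝ)
          ≤ ((∑ k ∈ Finset.range (n / 2 + 1),
              (2 * r) ^ k * ballCount r D (n - 2 * k) : ℕ) : ℝ) := by exact_mod_cast h0
        _ = _ := by
            rw [Nat.cast_sum]
            exact Finset.sum_congr rfl fun k _ => by push_cast; ring
    have hperk : ∀ k ∈ Finset.range (n / 2 + 1),
        ((2 * r : ℕ) : ℝ) ^ k * ((ballCount r D (n - 2 * k) : ℕ) : ℝ) ≤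
          K * Real.exp b * Real.exp (-(c' * n)) * Q ^ n * (8 / 9 : ℝ) ^ k +
            K * Q ^ N * ((2 * r : ℕ) : ℝ) ^ k := by
      intro k hk
      have h2k : 2 * k ≤ n := by
        have := Finset.mem_range.mp hk
        omega
      have hD := hDbd (n - 2 * k)
      have hcastm : ((n - 2 * k : ℕ) : ℝ) = (n : ℝ) - 2 * (k : ℝ) := by
        rw [Nat.cast_sub h2k]; push_cast; ring
      rw [hcastm] at hD
      have hexpsplit : Real.exp (b - c' * ((n : ℝ) - 2 * k)) =
          Real.exp b * Real.exp (-(c' * n)) * Real.exp (2 * c') ^ k := by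
        rw [← Real.exp_nat_mul, ← Real.exp_add, ← Real.exp_add]
        congr 1
        ring
      have hpow : (((2 * r : ℕ) : ℝ) * Real.exp (2 * c')) ^ k * Q ^ (n - 2 * k) ≤
          (8 / 9 : ℝ) ^ k * Q ^ n := by
        have hbase : ((2 * r : ℕ) : ℝ) * Real.exp (2 * c') ≤ 8 / 9 * Q ^ 2 := by
          rw [h2r]
          nlinarith [Real.exp_pos (2 * c'), hexp2c', hQ3, sq_nonneg (Q - 3)]
        have h1 : (((2 * r : ℕ) : ℝ) * Real.exp (2 * c')) ^ k ≤ (8 / 9 * Q ^ 2) ^ k :=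
          pow_le_pow_left₀ (by positivity) hbase k
        have h2 : (8 / 9 * Q ^ 2 : ℝ) ^ k * Q ^ (n - 2 * k) = (8 / 9 : ℝ) ^ k * Q ^ n := by
          rw [mul_pow, ← pow_mul, mul_assoc, ← pow_add]
          congr 2
          omega
        calc (((2 * r : ℕ) : ℝ) * Real.exp (2 * c')) ^ k * Q ^ (n - 2 * k)
            ≤ (8 / 9 * Q ^ 2) ^ k * Q ^ (n - 2 * k) :=
              mul_le_mul_of_nonneg_right h1 (by positivity)
          _ = _ := h2
      calc ((2 * r : ℕ) : ℝ) ^ k * ((ballCount r D (n - 2 * k) : ℕ) : ℝ)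
          ≤ ((2 * r : ℕ) : ℝ) ^ k *
              (K * Q ^ (n - 2 * k) * Real.exp (b - c' * ((n : ℝ) - 2 * k)) + K * Q ^ N) :=
            mul_le_mul_of_nonneg_left hD (by positivity)
        _ = K * Real.exp b * Real.exp (-(c' * n)) *
              ((((2 * r : ℕ) : ℝ) * Real.exp (2 * c')) ^ k * Q ^ (n - 2 * k)) +
              K * Q ^ N * ((2 * r : ℕ) : ℝ) ^ k := by
            rw [hexpsplit, mul_pow]; ring
        _ ≤ K * Real.exp b * Real.exp (-(c' * n)) * ((8 / 9 : ℝ) ^ k * Q ^ n) +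
              K * Q ^ N * ((2 * r : ℕ) : ℝ) ^ k := by
            have hnn : (0 : ℝ) ≤ K * Real.exp b * Real.exp (-(c' * n)) :=
              mul_nonneg (mul_nonneg hKpos.le (Real.exp_pos b).le) (Real.exp_pos _).le
            nlinarith [mul_le_mul_of_nonneg_left hpow hnn]
        _ = K * Real.exp b * Real.exp (-(c' * n)) * Q ^ n * (8 / 9 : ℝ) ^ k +
              K * Q ^ N * ((2 * r : ℕ) : ℝ) ^ k := by ring
    have hsum := hcast0.trans (Finset.sum_le_sum hperk)
    rw [Finset.sum_add_distrib, ← Finset.mul_sum, ← Finset.mul_sum] at hsum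
    have hgeo1 : K * Real.exp b * Real.exp (-(c' * n)) * Q ^ n *
        (∑ k ∈ Finset.range (n / 2 + 1), (8 / 9 : ℝ) ^ k) ≤
        K * Real.exp b * Real.exp (-(c' * n)) * Q ^ n * 9 := by
      exact mul_le_mul_of_nonneg_left (geom9 _ (by norm_num) le_rfl _)
        (mul_nonneg (mul_nonneg (mul_nonneg hKpos.le (Real.exp_pos b).le)
          (Real.exp_pos _).le) (pow_pos hQpos n).le)
    have hgeo2 : K * Q ^ N * (∑ k ∈ Finset.range (n / 2 + 1), ((2 * r : ℕ) : ℝ) ^ k) ≤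
        K * Q ^ N * (2 * (Q + 1) ^ (n / 2)) := by
      apply mul_le_mul_of_nonneg_left _ (mul_nonneg hKpos.le (pow_pos hQpos N).le)
      have hgs : ∑ k ∈ Finset.range (n / 2 + 1), ((2 * r : ℕ) : ℝ) ^ k =
          ((Q + 1) ^ (n / 2 + 1) - 1) / Q := by
        simp_rw [h2r]
        rw [geom_sum_eq (by linarith : Q + 1 ≠ 1), show Q + 1 - 1 = Q by ring]
      rw [hgs, div_le_iff₀ hQpos, pow_succ]
      have hp : (0 : ℝ) ≤ (Q + 1) ^ (n / 2) := by positivity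
      nlinarith
    have hhalf : (Q + 1) ^ (n / 2) ≤ (2 / 3 : ℝ) ^ n * Q ^ n := by
      have ha : (0 : ℝ) ≤ (Q + 1) ^ (n / 2) := by positivity
      have hb2 : (0 : ℝ) ≤ (2 / 3 : ℝ) ^ n * Q ^ n := by positivity
      refine (pow_le_pow_iff_left₀ ha hb2 (two_ne_zero)).mp ?_
      have e1 : ((Q + 1) ^ (n / 2)) ^ 2 = (Q + 1) ^ (n / 2 * 2) := by rw [← pow_mul]
      have e2 : ((2 / 3 : ℝ) ^ n * Q ^ n) ^ 2 = (4 / 9 * Q ^ 2) ^ n := by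
        rw [← mul_pow, ← pow_mul, mul_comm n 2, pow_mul]
        congr 1
        ring
      rw [e1, e2]
      calc (Q + 1) ^ (n / 2 * 2) ≤ (Q + 1) ^ n :=
            pow_le_pow_right₀ (by linarith) (by omega)
        _ ≤ (4 / 9 * Q ^ 2) ^ n := by
            apply pow_le_pow_left₀ (by linarith)
            nlinarith [sq_nonneg (Q - 3)]
    have h23n : (2 / 3 : ℝ) ^ n ≤ Real.exp (-(c' * n)) := by
      have he : Real.exp (-(c' * n)) = Real.exp (-c') ^ n := by
        rw [← Real.exp_nat_mul]
        congr 1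
        ring
      rw [he]
      exact pow_le_pow_left₀ (by norm_num) h23 n
    have hB2 : K * Q ^ N * (2 * (Q + 1) ^ (n / 2)) ≤
        2 * K * Q ^ N * Q ^ n * Real.exp (-(c' * n)) := by
      have hKQ : (0 : ℝ) ≤ K * Q ^ N := mul_nonneg hKpos.le (pow_pos hQpos N).le
      have step1 : (Q + 1) ^ (n / 2) ≤ Real.exp (-(c' * n)) * Q ^ n := by
        calc (Q + 1) ^ (n / 2) ≤ (2 / 3 : ℝ) ^ n * Q ^ n := hhalf
          _ ≤ Real.exp (-(c' * n)) * Q ^ n :=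
              mul_le_mul_of_nonneg_right h23n (by positivity)
      nlinarith [mul_le_mul_of_nonneg_left step1 hKQ]
    calc ((ballCount r ({u | Reduced u} \ A) n : ℕ) : ℝ)
        ≤ K * Real.exp b * Real.exp (-(c' * n)) * Q ^ n *
            (∑ k ∈ Finset.range (n / 2 + 1), (8 / 9 : ℝ) ^ k) +
          K * Q ^ N * (∑ k ∈ Finset.range (n / 2 + 1), ((2 * r : ℕ) : ℝ) ^ k) := hsum
      _ ≤ K * Real.exp b * Real.exp (-(c' * n)) * Q ^ n * 9 +
          2 * K * Q ^ N * Q ^ n * Real.exp (-(c' * n)) := by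
          linarith [hgeo1, hgeo2.trans hB2]
      _ = (9 * K * Real.exp b + 2 * K * Q ^ N) * Q ^ n * Real.exp (-(c' * n)) := by ring
  -- conclusion
  set C0 : ℝ := 9 * K * Real.exp b + 2 * K * Q ^ N with hC0def
  have hC0pos : 0 < C0 := by
    have := Real.exp_pos b
    have := pow_pos hQpos N
    rw [hC0def]; nlinarith
  refine ⟨c', hc'pos, Real.log C0, 0, fun n _ => ?_⟩
  have hQn : (0 : ℝ) < Q ^ n := pow_pos hQpos n
  have hRge : Q ^ n ≤ ((ballCount r {u | Reduced u} n : ℕ) : ℝ) := by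
    rw [hQdef]; exact ballRed_ge_real hr n
  have hRpos : (0 : ℝ) < ((ballCount r {u | Reduced u} n : ℕ) : ℝ) := lt_of_lt_of_le hQn hRge
  have hpartR : ((ballCount r {u | Reduced u} n : ℕ) : ℝ) =
      (ballCount r A n : ℝ) + (ballCount r ({u | Reduced u} \ A) n : ℝ) := by
    exact_mod_cast ball_partition hAsub n
  have heq : 1 - (ballCount r A n : ℝ) / (ballCount r {u | Reduced u} n : ℝ) =
      (ballCount r ({u | Reduced u} \ A) n : ℝ) / (ballCount r {u | Reduced u} n : ℝ) := by
    field_simp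
    linarith
  rw [heq]
  have h1 : (ballCount r ({u | Reduced u} \ A) n : ℝ) / (ballCount r {u | Reduced u} n : ℝ) ≤
      (ballCount r ({u | Reduced u} \ A) n : ℝ) / Q ^ n :=
    div_le_div_of_nonneg_left (Nat.cast_nonneg _) hQn hRge
  have h2 : (ballCount r ({u | Reduced u} \ A) n : ℝ) / Q ^ n ≤ C0 * Real.exp (-(c' * n)) := by
    rw [div_le_iff₀ hQn]
    calc (ballCount r ({u | Reduced u} \ A) n : ℝ)
        ≤ C0 * Q ^ n * Real.exp (-(c' * n)) := hbad n
      _ = C0 * Real.exp (-(c' * n)) * Q ^ n := by ring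
  have h3 : C0 * Real.exp (-(c' * n)) = Real.exp (Real.log C0 - c' * n) := by
    rw [Real.exp_sub, Real.exp_log hC0pos, Real.exp_neg, div_eq_mul_inv]
  exact (h1.trans h2).trans_eq h3
end
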